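/- The restricted measure projection π_K : K → [0, λ(K)] is surjective. -/

import Mathlib

open MeasureTheory Set

/-- Measure projection `π_K`. -/
noncomputable def piProj (K : Set ℝ) (x : ℝ) : ℝ :=
  (volume (Set.Icc (sInf K) x ∩ K)).toReal

theorem stmt2 (K : Set ℝ) (hK : IsCompact K) (hpos : 0 < volume K) :
    ∀ t ∈ Set.Icc (0 : ℝ) (volume K).toReal, ∃ x ∈ K, piProj K x = t := by
  intro t ht
  have hne : K.Nonempty := by
    rcases K.eq_empty_or_nonempty with h | h
    · simp [h] at hpos
    · exact h
  set a := sInf K with ha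
  set b := sSup K with hb
  have haK : a ∈ K := hK.sInf_mem hne
  have hbK : b ∈ K := hK.sSup_mem hne
  have hab : a ≤ b := csInf_le_csSup hne hK.bddBelow hK.bddAbove
  have hsub : K ⊆ Icc a b := subset_Icc_csInf_csSup hK.bddBelow hK.bddAbove
  have hfin' : ∀ x : ℝ, volume (Icc a x ∩ K) ≠ ⊤ := fun x =>
    (lt_of_le_of_lt (measure_mono inter_subset_right) hK.measure_lt_top).ne
  have key : ∀ {x y : ℝ}, y ≤ x →
      piProj K y ≤ piProj K x ∧ piProj K x ≤ piProj K y + (x - y) := by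
    intro x y hyx
    constructor
    · exact ENNReal.toReal_mono (hfin' x)
        (measure_mono (inter_subset_inter_left _ (Icc_subset_Icc le_rfl hyx)))
    · have h1 : Icc a x ∩ K ⊆ (Icc a y ∩ K) ∪ Ioc y x := by
        rintro k ⟨⟨hk1, hk2⟩, hk⟩
        rcases le_or_gt k y with h | h
        · exact Or.inl ⟨⟨hk1, h⟩, hk⟩
        · exact Or.inr ⟨h, hk2⟩
      have h2 : volume (Icc a x ∩ K) ≤ volume (Icc a y ∩ K) + ENNReal.ofReal (x - y) := by
        calc volume (Icc a x ∩ K) ≤ volume ((Icc a y ∩ K) ∪ Ioc y x) := measure_mono h1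
        _ ≤ volume (Icc a y ∩ K) + volume (Ioc y x) := measure_union_le _ _
        _ = volume (Icc a y ∩ K) + ENNReal.ofReal (x - y) := by rw [Real.volume_Ioc]
      have h3 := ENNReal.toReal_mono
        (ENNReal.add_ne_top.mpr ⟨hfin' y, ENNReal.ofReal_ne_top⟩) h2
      rwa [ENNReal.toReal_add (hfin' y) ENNReal.ofReal_ne_top,
        ENNReal.toReal_ofReal (by linarith)] at h3
  have hlip : LipschitzWith 1 (piProj K) := by
    apply LipschitzWith.of_dist_le_mul
    intro x y
    rcases le_total y x with h | h
    · rw [Real.dist_eq, Real.dist_eq, abs_of_nonneg (by linarith [(key h).1]),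
        abs_of_nonneg (by linarith)]
      have := (key h).2
      push_cast
      linarith
    · rw [Real.dist_eq, Real.dist_eq, abs_of_nonpos (by linarith [(key h).1]),
        abs_of_nonpos (by linarith)]
      have := (key h).2
      push_cast
      linarith
  have hfa : piProj K a = 0 := by
    have h0 : volume (Icc a a ∩ K) = 0 := by
      refine le_antisymm ?_ zero_le
      calc volume (Icc a a ∩ K) ≤ volume (Icc a a) := measure_mono inter_subset_left
      _ = 0 := by simp
    rw [Icc_self] at h0
    simp [piProj, ← ha, h0]
  have hfb : piProj K b = (volume K).toReal := by
    have : Icc a b ∩ K = K := inter_eq_right.mpr hsub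
    simp [piProj, ← ha, this]
  have hivt := intermediate_value_Icc hab hlip.continuous.continuousOn
  rw [hfa, hfb] at hivt
  obtain ⟨x, hxab, hfx⟩ := hivt ht
  -- move x to the closest point of K to its left
  have hcomp : IsCompact (K ∩ Iic x) := hK.inter_right isClosed_Iic
  have hne2 : (K ∩ Iic x).Nonempty := ⟨a, haK, hxab.1⟩
  set x' := sSup (K ∩ Iic x) with hx'
  have hx'mem : x' ∈ K ∩ Iic x := hcomp.sSup_mem hne2
  refine ⟨x', hx'mem.1, ?_⟩
  have hset : Icc a x ∩ K = Icc a x' ∩ K := by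
    apply Subset.antisymm
    · rintro k ⟨⟨h1, h2⟩, hk⟩
      exact ⟨⟨h1, le_csSup hcomp.bddAbove ⟨hk, h2⟩⟩, hk⟩
    · exact inter_subset_inter_left _ (Icc_subset_Icc le_rfl hx'mem.2)
  show (volume (Icc (sInf K) x' ∩ K)).toReal = t
  rw [← ha, ← hset]
  exact hfx
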